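/- Let (A, m) be a commutative noetherian local ring and K a perfect complex of A-modules. Then K has Tor-amplitude contained in an interval [a,b] if and only if H^n(K ⊗^L_A A/m) = 0 for all n outside [a,b]. -/

import Mathlib

open CategoryTheory Limits MonoidalCategory

/-- Degreewise tensor product of a complex of modules with a fixed module.
Since the complexes considered below have projective (hence flat) components, this
computes the derived tensor product `K ⊗^L M`. -/
noncomputable def cxTensor {A : Type} [CommRing A]
    (K : CochainComplex (ModuleCat.{0} A) ℤ) (M : ModuleCat.{0} A) :
    CochainComplex (ModuleCat.{0} A) ℤ :=
  ((tensorRight M).mapHomologicalComplex (ComplexShape.up ℤ)).obj K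

namespace Stmt6Aux

open IsLocalRing TensorProduct Submodule

variable {A : Type} [CommRing A]

/-- Nakayama: a map into a f.g. module which is surjective mod the maximal ideal
is surjective. -/
theorem lemN [IsLocalRing A] {N P : Type} [AddCommGroup N] [Module A N] [AddCommGroup P]
    [Module A P] [Module.Finite A P] (f : N →ₗ[A] P)
    (h : ∀ p : P, p ∈ LinearMap.range f ⊔ (maximalIdeal A) • (⊤ : Submodule A P)) :
    Function.Surjective f := by
  rw [← LinearMap.range_eq_top, ← Submodule.Quotient.subsingleton_iff]
  have hQ : (⊤ : Submodule A (P ⧸ LinearMap.range f)) ≤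
      (maximalIdeal A) • (⊤ : Submodule A (P ⧸ LinearMap.range f)) := by
    rintro q -
    obtain ⟨p, rfl⟩ := (LinearMap.range f).mkQ_surjective q
    obtain ⟨y, hy, z, hz, rfl⟩ := Submodule.mem_sup.mp (h p)
    have hy0 : (LinearMap.range f).mkQ y = 0 := by
      simpa [Submodule.Quotient.mk_eq_zero] using hy
    have hzm : (LinearMap.range f).mkQ z ∈
        (maximalIdeal A) • (⊤ : Submodule A (P ⧸ LinearMap.range f)) := by
      have := Submodule.mem_map_of_mem (f := (LinearMap.range f).mkQ) hz
      rw [Submodule.map_smul''] at this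
      exact Submodule.smul_mono le_rfl le_top this
    simpa [map_add, hy0] using hzm
  have htop : (⊤ : Submodule A (P ⧸ LinearMap.range f)) = ⊥ :=
    Submodule.eq_bot_of_le_smul_of_le_jacobson_bot (maximalIdeal A) ⊤
      Module.Finite.fg_top hQ (maximalIdeal_le_jacobson ⊥)
  refine subsingleton_of_forall_eq 0 fun q => ?_
  have : q ∈ (⊥ : Submodule A (P ⧸ LinearMap.range f)) := htop ▸ Submodule.mem_top
  simpa using this

/-- A map of modules over a local ring which is injective mod the maximal ideal,
with finite source and projective target, is split injective. -/
theorem lemL [IsLocalRing A] {P F : Type} [AddCommGroup P] [Module A P] [AddCommGroup F]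
    [Module A F] [Module.Finite A P] [Module.Projective A F] (f : P →ₗ[A] F)
    (hinj : ∀ p : P, f p ∈ (maximalIdeal A) • (⊤ : Submodule A F) →
      p ∈ (maximalIdeal A) • (⊤ : Submodule A P)) :
    ∃ g : F →ₗ[A] P, ∀ p, g (f p) = p := by
  have hleP : (maximalIdeal A) • (⊤ : Submodule A P) ≤
      ((maximalIdeal A) • (⊤ : Submodule A F)).comap f := by
    intro x hx
    have : f x ∈ Submodule.map f ((maximalIdeal A) • (⊤ : Submodule A P)) :=
      Submodule.mem_map_of_mem hx
    rw [Submodule.map_smul''] at this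
    exact Submodule.smul_mono le_rfl le_top this
  set fbar : (P ⧸ (maximalIdeal A) • (⊤ : Submodule A P)) →ₗ[A]
      (F ⧸ (maximalIdeal A) • (⊤ : Submodule A F)) :=
    Submodule.mapQ _ _ f hleP with hfbar
  have hmksurj : Function.Surjective (algebraMap A (A ⧸ maximalIdeal A)) :=
    Ideal.Quotient.mk_surjective
  set fk := fbar.extendScalarsOfSurjective hmksurj with hfk
  have hker : LinearMap.ker fk = ⊥ := by
    rw [LinearMap.ker_eq_bot]
    intro x y hxy
    obtain ⟨p, rfl⟩ := Submodule.mkQ_surjective _ x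
    obtain ⟨q, rfl⟩ := Submodule.mkQ_surjective _ y
    have hx : fk ((Submodule.mkQ _) p) = Submodule.Quotient.mk (f p) := by
      simp [hfk, hfbar, LinearMap.extendScalarsOfSurjective_apply, Submodule.mapQ_apply]
    have hy : fk ((Submodule.mkQ _) q) = Submodule.Quotient.mk (f q) := by
      simp [hfk, hfbar, LinearMap.extendScalarsOfSurjective_apply, Submodule.mapQ_apply]
    rw [hx, hy] at hxy
    have : f p - f q ∈ (maximalIdeal A) • (⊤ : Submodule A F) :=
      (Submodule.Quotient.eq _).mp hxy
    rw [← map_sub] at this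
    have := hinj _ this
    simpa [Submodule.Quotient.eq] using (Submodule.Quotient.eq _).mpr this
  letI : Field (A ⧸ maximalIdeal A) := Ideal.Quotient.field _
  obtain ⟨rbar, hrbar⟩ := LinearMap.exists_leftInverse_of_injective fk hker
  set rA : F →ₗ[A] (P ⧸ (maximalIdeal A) • (⊤ : Submodule A P)) :=
    (rbar.restrictScalars A).comp (Submodule.mkQ _) with hrA
  obtain ⟨g, hg⟩ := Module.projective_lifting_property
    (Submodule.mkQ ((maximalIdeal A) • (⊤ : Submodule A P))) rA (Submodule.mkQ_surjective _)
  have key : ∀ p : P, Submodule.mkQ _ (g (f p)) =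
      Submodule.mkQ ((maximalIdeal A) • (⊤ : Submodule A P)) p := by
    intro p
    have h1 : Submodule.mkQ _ (g (f p)) = rA (f p) := by
      rw [← hg]; rfl
    rw [h1, hrA]
    have h2 : (Submodule.mkQ ((maximalIdeal A) • (⊤ : Submodule A F))) (f p)
        = fk (Submodule.mkQ _ p) := by
      simp [hfk, hfbar, LinearMap.extendScalarsOfSurjective_apply, Submodule.mapQ_apply]
    simp only [LinearMap.comp_apply, LinearMap.coe_restrictScalars, h2]
    have := LinearMap.congr_fun hrbar (Submodule.mkQ _ p)
    simpa using this
  set e := g.comp f with he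
  have hesurj : Function.Surjective e := by
    apply lemN
    intro p
    apply Submodule.mem_sup.mpr
    refine ⟨e p, ⟨p, rfl⟩, p - e p, ?_, by abel⟩
    have h0 : Submodule.Quotient.mk (p := (maximalIdeal A) • (⊤ : Submodule A P)) (p - e p)
        = 0 := by
      have he2 : e p = g (f p) := rfl
      have hk := key p
      simp only [Submodule.mkQ_apply] at hk
      rw [Submodule.Quotient.mk_sub, he2, ← hk, sub_self]
    exact (Submodule.Quotient.mk_eq_zero _).mp h0
  have heinj : Function.Injective e :=
    OrzechProperty.injective_of_surjective_endomorphism e hesurj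
  set eqv := LinearEquiv.ofBijective e ⟨heinj, hesurj⟩ with heq
  refine ⟨(eqv.symm : P →ₗ[A] P).comp g, fun p => ?_⟩
  have : eqv p = e p := rfl
  simp only [LinearMap.comp_apply]
  show eqv.symm (g (f p)) = p
  have hge : g (f p) = eqv p := this.symm
  rw [hge, LinearEquiv.symm_apply_apply]

section reduction

theorem isZero_homology_iff (L : CochainComplex (ModuleCat.{0} A) ℤ) (n : ℤ) :
    IsZero (L.homology n) ↔
      ∀ x : L.X n, L.d n (n+1) x = 0 → ∃ y : L.X (n-1), L.d (n-1) n y = x := by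
  rw [← HomologicalComplex.exactAt_iff_isZero_homology,
    L.exactAt_iff' (n-1) n (n+1) (by simp) (by simp),
    ShortComplex.moduleCat_exact_iff]
  rfl

theorem isZero_homology_cxTensor_iff (K : CochainComplex (ModuleCat.{0} A) ℤ)
    (M : ModuleCat.{0} A) (n : ℤ) :
    IsZero ((cxTensor K M).homology n) ↔
      ∀ x : (K.X n : Type) ⊗[A] M, LinearMap.rTensor M (K.d n (n+1)).hom x = 0 →
        ∃ y : (K.X (n-1) : Type) ⊗[A] M, LinearMap.rTensor M (K.d (n-1) n).hom y = x :=
  isZero_homology_iff _ n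

theorem subsingleton_of_isZero {X : ModuleCat.{0} A} (h : IsZero X) : Subsingleton X := by
  have h0 : (𝟙 X : X ⟶ X) = 0 := h.eq_of_src _ _
  refine ⟨fun v w => ?_⟩
  have hv : v = (0 : X ⟶ X) v := by rw [← h0]; rfl
  have hw : w = (0 : X ⟶ X) w := by rw [← h0]; rfl
  rw [hv, hw]
  rfl

end reduction

section modm
variable [IsLocalRing A]

noncomputable def phiQ (X : Type) [AddCommGroup X] [Module A X] :
    (X ⊗[A] (ResidueField A)) ≃ₗ[A] X ⧸ ((maximalIdeal A) • ⊤ : Submodule A X) :=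
  TensorProduct.tensorQuotEquivQuotSMul X (maximalIdeal A)

theorem phiQ_tmul (X : Type) [AddCommGroup X] [Module A X] (x : X) (r : A) :
    phiQ X (x ⊗ₜ[A] (residue A r)) = Submodule.Quotient.mk (r • x) := by
  exact TensorProduct.tensorQuotEquivQuotSMul_tmul_mk (maximalIdeal A) x r

theorem smul_top_le_comap {X Y : Type} [AddCommGroup X] [Module A X] [AddCommGroup Y]
    [Module A Y] (f : X →ₗ[A] Y) :
    (maximalIdeal A) • (⊤ : Submodule A X) ≤
      (((maximalIdeal A) • (⊤ : Submodule A Y)).comap f) := by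
  intro x hx
  have : f x ∈ Submodule.map f ((maximalIdeal A) • (⊤ : Submodule A X)) :=
    Submodule.mem_map_of_mem hx
  rw [Submodule.map_smul''] at this
  exact Submodule.smul_mono le_rfl le_top this

theorem phiQ_natural {X Y : Type} [AddCommGroup X] [Module A X] [AddCommGroup Y] [Module A Y]
    (f : X →ₗ[A] Y) (t : X ⊗[A] (ResidueField A)) :
    phiQ Y (LinearMap.rTensor _ f t) =
      Submodule.mapQ _ _ f (smul_top_le_comap f) (phiQ X t) := by
  induction t using TensorProduct.induction_on with
  | zero => simp
  | tmul x c =>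
    obtain ⟨r, rfl⟩ := residue_surjective (R := A) c
    rw [LinearMap.rTensor_tmul, phiQ_tmul, phiQ_tmul, Submodule.mapQ_apply, map_smul]
  | add s t hs ht => simp [map_add, hs, ht]

theorem emod_of_exact {K : CochainComplex (ModuleCat.{0} A) ℤ} {n : ℤ}
    (hE : ∀ x : (K.X n : Type) ⊗[A] (ResidueField A),
      LinearMap.rTensor _ (K.d n (n+1)).hom x = 0 →
      ∃ y : (K.X (n-1) : Type) ⊗[A] (ResidueField A),
        LinearMap.rTensor _ (K.d (n-1) n).hom y = x) :
    ∀ v : K.X n, K.d n (n+1) v ∈ (maximalIdeal A) • (⊤ : Submodule A (K.X (n+1))) →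
      v ∈ LinearMap.range (K.d (n-1) n).hom ⊔ (maximalIdeal A) • (⊤ : Submodule A (K.X n)) := by
  intro v hv
  have h1 : LinearMap.rTensor (ResidueField A) (K.d n (n+1)).hom (v ⊗ₜ residue A 1) = 0 := by
    apply (phiQ (K.X (n+1))).injective
    rw [LinearMap.rTensor_tmul, phiQ_tmul, map_zero, one_smul]
    exact (Submodule.Quotient.mk_eq_zero _).mpr hv
  obtain ⟨y, hy⟩ := hE _ h1
  obtain ⟨u, hu⟩ := Submodule.mkQ_surjective _ (phiQ (K.X (n-1)) y)
  have h2 : Submodule.Quotient.mk (p := (maximalIdeal A) • (⊤ : Submodule A (K.X n)))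
      (K.d (n-1) n u) = Submodule.Quotient.mk v := by
    have := congrArg (phiQ (K.X n)) hy
    rw [phiQ_natural, phiQ_tmul, one_smul] at this
    rw [← hu] at this
    simpa [Submodule.mapQ_apply] using this
  apply Submodule.mem_sup.mpr
  refine ⟨K.d (n-1) n u, ⟨u, rfl⟩, v - K.d (n-1) n u, ?_, by abel⟩
  exact (Submodule.Quotient.eq _).mp h2.symm

end modm

section complex
variable (K : CochainComplex (ModuleCat.{0} A) ℤ)

theorem d_d_apply (i j k : ℤ) (v : K.X i) : K.d j k (K.d i j v) = 0 := by
  have h1 : K.d j k (K.d i j v) = (K.d i j ≫ K.d j k) v := rfl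
  rw [h1, K.d_comp_d]
  rfl

def KZ (i : ℤ) : Submodule A (K.X i) := LinearMap.ker (K.d i (i+1)).hom

theorem mem_KZ (i : ℤ) (v : K.X i) : v ∈ KZ K i ↔ K.d i (i+1) v = 0 := Iff.rfl

def KCtop (i : ℤ) : Prop :=
  (∃ r : (K.X i : Type) →ₗ[A] KZ K i, ∀ z : KZ K i, r z = z) ∧
  (∀ p : ℤ, p + 1 = i →
    ∃ s : (KZ K i : Type) →ₗ[A] K.X p, ∀ z : KZ K i, K.d p i (s z) = (z : K.X i))

theorem KCtopBase (i : ℤ) (h : Subsingleton (K.X i)) : KCtop K i := by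
  constructor
  · exact ⟨0, fun z => Subtype.ext (Subsingleton.elim _ _)⟩
  · intro p hp
    exact ⟨0, fun z => Subsingleton.elim _ _⟩

theorem KCtopStep [IsLocalRing A] [IsNoetherianRing A] (i : ℤ)
    [Module.Finite A (K.X i)] [Module.Projective A (K.X i)]
    (hnext : KCtop K (i+1))
    (hEmod : ∀ v : K.X i, K.d i (i+1) v ∈ maximalIdeal A • (⊤ : Submodule A (K.X (i+1))) →
      v ∈ LinearMap.range (K.d (i-1) i).hom ⊔ maximalIdeal A • (⊤ : Submodule A (K.X i))) :
    KCtop K i := by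
  obtain ⟨⟨r1, hr1⟩, hs1⟩ := hnext
  obtain ⟨s1, hs1'⟩ := hs1 i rfl
  set δ : (K.X i : Type) →ₗ[A] KZ K (i+1) :=
    (K.d i (i+1)).hom.codRestrict (KZ K (i+1)) (fun v => d_d_apply K i (i+1) (i+1+1) v) with hδ
  set e : (K.X i : Type) →ₗ[A] K.X i := s1 ∘ₗ δ with he
  have hδcoe : ∀ v : K.X i, (δ v : K.X (i+1)) = K.d i (i+1) v := fun v => rfl
  have hde : ∀ v, K.d i (i+1) (e v) = K.d i (i+1) v := by
    intro v
    show K.d i (i+1) (s1 (δ v)) = _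
    rw [hs1', hδcoe]
  have hker : ∀ v, ((LinearMap.id : (K.X i : Type) →ₗ[A] K.X i) - e) v ∈ KZ K i := by
    intro v
    rw [mem_KZ]
    simp [map_sub, hde]
  set ρ : (K.X i : Type) →ₗ[A] KZ K i :=
    ((LinearMap.id : (K.X i : Type) →ₗ[A] K.X i) - e).codRestrict _ hker with hρdef
  have hρcoe : ∀ v : K.X i, (ρ v : K.X i) = v - e v := fun v => rfl
  have hez : ∀ z : KZ K i, e (z : K.X i) = 0 := by
    intro z
    have hδz : δ (z : K.X i) = 0 := Subtype.ext (by rw [hδcoe]; exact z.2)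
    show s1 (δ (z : K.X i)) = 0
    rw [hδz, map_zero]
  have hρ : ∀ z : KZ K i, ρ (z : K.X i) = z := by
    intro z
    apply Subtype.ext
    rw [hρcoe, hez, sub_zero]
  refine ⟨⟨ρ, hρ⟩, ?_⟩
  intro p hp
  obtain rfl : p = i - 1 := by omega
  set δ' : (K.X (i-1) : Type) →ₗ[A] KZ K i :=
    (K.d (i-1) i).hom.codRestrict (KZ K i) (fun v => d_d_apply K (i-1) i (i+1) v) with hδ'
  have hδ'coe : ∀ v : K.X (i-1), (δ' v : K.X i) = K.d (i-1) i v := fun v => rfl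
  haveI : Module.Finite A (KZ K i) :=
    ⟨(Submodule.fg_top _).mpr (IsNoetherian.noetherian _)⟩
  haveI : Module.Projective A (KZ K i) :=
    Module.Projective.of_split (KZ K i).subtype ρ (by ext z; exact congrArg _ (hρ z))
  have hsurj : Function.Surjective δ' := by
    apply lemN
    intro z
    have h0 : K.d i (i+1) (z : K.X i) ∈ maximalIdeal A • (⊤ : Submodule A (K.X (i+1))) := by
      rw [(mem_KZ K i _).mp z.2]
      exact Submodule.zero_mem _
    obtain ⟨y, hy, w, hw, hzw⟩ := Submodule.mem_sup.mp (hEmod (z : K.X i) h0)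
    obtain ⟨u, rfl⟩ := hy
    have hwZ : w ∈ KZ K i := by
      have : w = (z : K.X i) - K.d (i-1) i u := by rw [← hzw]; abel
      rw [this]
      exact Submodule.sub_mem _ z.2 ((mem_KZ K i _).mpr (d_d_apply K (i-1) i (i+1) u))
    apply Submodule.mem_sup.mpr
    refine ⟨δ' u, ⟨u, rfl⟩, ⟨w, hwZ⟩, ?_, ?_⟩
    · have h1 : (⟨w, hwZ⟩ : KZ K i) = ρ w := (hρ ⟨w, hwZ⟩).symm
      rw [h1]
      have : ρ w ∈ Submodule.map ρ (maximalIdeal A • (⊤ : Submodule A (K.X i))) :=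
        Submodule.mem_map_of_mem hw
      rw [Submodule.map_smul''] at this
      exact Submodule.smul_mono le_rfl le_top this
    · apply Subtype.ext
      show K.d (i-1) i u + w = (z : K.X i)
      exact hzw
  obtain ⟨s, hs⟩ := Module.projective_lifting_property δ' LinearMap.id hsurj
  refine ⟨s, fun z => ?_⟩
  have h2 : δ' (s z) = z := by
    have := DFunLike.congr_fun hs z
    simpa using this
  rw [← hδ'coe, h2]

theorem exactTop (n : ℤ) (hn : KCtop K n) (hn1 : KCtop K (n+1))
    (M : Type) [AddCommGroup M] [Module A M] :
    ∀ x : (K.X n : Type) ⊗[A] M, LinearMap.rTensor M (K.d n (n+1)).hom x = 0 →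
      ∃ y : (K.X (n-1) : Type) ⊗[A] M, LinearMap.rTensor M (K.d (n-1) n).hom y = x := by
  obtain ⟨-, hs0'⟩ := hn
  obtain ⟨s0, hs0⟩ := hs0' (n-1) (by omega)
  obtain ⟨⟨r1, hr1⟩, hs1'⟩ := hn1
  obtain ⟨s1, hs1⟩ := hs1' n rfl
  set δ : (K.X n : Type) →ₗ[A] KZ K (n+1) :=
    (K.d n (n+1)).hom.codRestrict (KZ K (n+1)) (fun v => d_d_apply K n (n+1) (n+1+1) v) with hδ
  have hde : ∀ v, K.d n (n+1) (s1 (δ v)) = K.d n (n+1) v := by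
    intro v
    rw [hs1]
    rfl
  have hker : ∀ v, ((LinearMap.id : (K.X n : Type) →ₗ[A] K.X n) - s1 ∘ₗ δ) v ∈ KZ K n := by
    intro v
    rw [mem_KZ]
    simp only [LinearMap.sub_apply, LinearMap.id_apply, LinearMap.comp_apply, map_sub, hde,
      sub_self]
  set ρ : (K.X n : Type) →ₗ[A] KZ K n :=
    ((LinearMap.id : (K.X n : Type) →ₗ[A] K.X n) - s1 ∘ₗ δ).codRestrict _ hker with hρ
  intro x hx
  have hinj : Function.Injective (LinearMap.rTensor M (KZ K (n+1)).subtype) := by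
    have hcomp : r1 ∘ₗ (KZ K (n+1)).subtype = LinearMap.id := by
      ext z; exact congrArg _ (hr1 z)
    apply Function.LeftInverse.injective (g := LinearMap.rTensor M r1)
    intro t
    rw [← LinearMap.comp_apply, ← LinearMap.rTensor_comp, hcomp, LinearMap.rTensor_id,
      LinearMap.id_apply]
  have hδx : LinearMap.rTensor M δ x = 0 := by
    apply hinj
    have h1 : (KZ K (n+1)).subtype ∘ₗ δ = (K.d n (n+1)).hom := rfl
    rw [← LinearMap.comp_apply, ← LinearMap.rTensor_comp, h1, hx, map_zero]
  have hid : (KZ K n).subtype ∘ₗ ρ + s1 ∘ₗ δ = (LinearMap.id : (K.X n : Type) →ₗ[A] K.X n) := by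
    ext v
    show (v - s1 (δ v)) + s1 (δ v) = v
    abel
  have h5 : LinearMap.rTensor M ((KZ K n).subtype ∘ₗ ρ) x
      + LinearMap.rTensor M (s1 ∘ₗ δ) x = x := by
    rw [← LinearMap.add_apply, ← LinearMap.rTensor_add, hid, LinearMap.rTensor_id,
      LinearMap.id_apply]
  have h6 : LinearMap.rTensor M (s1 ∘ₗ δ) x = 0 := by
    rw [LinearMap.rTensor_comp, LinearMap.comp_apply, hδx, map_zero]
  have h7 : (KZ K n).subtype = (K.d (n-1) n).hom ∘ₗ s0 := by
    ext z
    exact (hs0 z).symm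
  refine ⟨LinearMap.rTensor M (s0 ∘ₗ ρ) x, ?_⟩
  rw [← LinearMap.rTensor_comp_apply]
  have h8 : (K.d (n-1) n).hom ∘ₗ (s0 ∘ₗ ρ) = (KZ K n).subtype ∘ₗ ρ := by
    rw [h7, LinearMap.comp_assoc]
  rw [h8]
  rw [h6, add_zero] at h5
  exact h5

def KB (i : ℤ) : Submodule A (K.X i) := LinearMap.range (K.d (i-1) i).hom

def KCbot (i : ℤ) : Prop :=
  (∃ σ : ((K.X i : Type) ⧸ KB K i) →ₗ[A] K.X i,
    ∀ v : K.X i, (KB K i).mkQ (σ ((KB K i).mkQ v)) = (KB K i).mkQ v) ∧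
  (∀ q : ℤ, i + 1 = q →
    ∃ t : (K.X q : Type) →ₗ[A] ((K.X i : Type) ⧸ KB K i),
      ∀ v : K.X i, t (K.d i q v) = (KB K i).mkQ v)

theorem KCbotBase (i : ℤ) (h : Subsingleton (K.X i)) : KCbot K i := by
  haveI : Subsingleton ((K.X i : Type) ⧸ KB K i) :=
    (Submodule.mkQ_surjective (KB K i)).subsingleton
  exact ⟨⟨0, fun v => Subsingleton.elim _ _⟩,
    fun q hq => ⟨0, fun v => Subsingleton.elim _ _⟩⟩

theorem KCbotStep [IsLocalRing A] (i : ℤ)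
    [Module.Finite A (K.X i)] [Module.Projective A (K.X (i+1))]
    (hprev : KCbot K (i-1))
    (hEmod : ∀ v : K.X i, K.d i (i+1) v ∈ maximalIdeal A • (⊤ : Submodule A (K.X (i+1))) →
      v ∈ LinearMap.range (K.d (i-1) i).hom ⊔ maximalIdeal A • (⊤ : Submodule A (K.X i))) :
    KCbot K i := by
  obtain ⟨⟨σ', hσ'⟩, ht'⟩ := hprev
  obtain ⟨t', ht'⟩ := ht' i (by omega)
  set e : (K.X i : Type) →ₗ[A] K.X i := (K.d (i-1) i).hom ∘ₗ σ' ∘ₗ t' with he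
  have ha : ∀ w : K.X (i-1), e (K.d (i-1) i w) = K.d (i-1) i w := by
    intro w
    show K.d (i-1) i (σ' (t' (K.d (i-1) i w))) = K.d (i-1) i w
    rw [ht']
    have hmem : σ' ((KB K (i-1)).mkQ w) - w ∈ KB K (i-1) := by
      have h0 : (KB K (i-1)).mkQ (σ' ((KB K (i-1)).mkQ w) - w) = 0 := by
        rw [map_sub, hσ', sub_self]
      rwa [Submodule.mkQ_apply, Submodule.Quotient.mk_eq_zero] at h0
    obtain ⟨c, hc⟩ := hmem
    have : σ' ((KB K (i-1)).mkQ w) = K.d (i-1-1) (i-1) c + w := by rw [hc]; abel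
    rw [this, map_add, d_d_apply, zero_add]
  have himg : ∀ v : K.X i, e v ∈ KB K i := fun v => ⟨σ' (t' v), rfl⟩
  have hkerσ : KB K i ≤ LinearMap.ker
      ((LinearMap.id : (K.X i : Type) →ₗ[A] K.X i) - e) := by
    rintro v ⟨w, rfl⟩
    rw [LinearMap.mem_ker, LinearMap.sub_apply, LinearMap.id_apply, ha, sub_self]
  set σ : ((K.X i : Type) ⧸ KB K i) →ₗ[A] K.X i :=
    Submodule.liftQ _ _ hkerσ with hσdef
  have hσap : ∀ v : K.X i, σ ((KB K i).mkQ v) = v - e v := fun v => rfl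
  have hσ : ∀ v : K.X i, (KB K i).mkQ (σ ((KB K i).mkQ v)) = (KB K i).mkQ v := by
    intro v
    have h0 : (KB K i).mkQ (e v) = 0 := by
      rw [Submodule.mkQ_apply, Submodule.Quotient.mk_eq_zero]
      exact himg v
    rw [hσap, map_sub, h0, sub_zero]
  refine ⟨⟨σ, hσ⟩, ?_⟩
  intro q hq
  obtain rfl : q = i + 1 := by omega
  have h2 : KB K i ≤ LinearMap.ker (K.d i (i+1)).hom := by
    rintro v ⟨w, rfl⟩
    rw [LinearMap.mem_ker]
    exact d_d_apply K (i-1) i (i+1) w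
  set c : ((K.X i : Type) ⧸ KB K i) →ₗ[A] K.X (i+1) :=
    Submodule.liftQ _ _ h2 with hcdef
  have hcap : ∀ v : K.X i, c ((KB K i).mkQ v) = K.d i (i+1) v := fun v => rfl
  have hinjc : ∀ ξ : ((K.X i : Type) ⧸ KB K i),
      c ξ ∈ maximalIdeal A • (⊤ : Submodule A (K.X (i+1))) →
      ξ ∈ maximalIdeal A • (⊤ : Submodule A ((K.X i : Type) ⧸ KB K i)) := by
    intro ξ hξ
    obtain ⟨v, rfl⟩ := Submodule.mkQ_surjective _ ξ
    rw [hcap] at hξ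
    obtain ⟨y, hy, z, hz, hyz⟩ := Submodule.mem_sup.mp (hEmod v hξ)
    have h3 : (KB K i).mkQ v = (KB K i).mkQ z := by
      have h0 : (KB K i).mkQ y = 0 := by
        rw [Submodule.mkQ_apply, Submodule.Quotient.mk_eq_zero]
        exact hy
      rw [← hyz, map_add, h0, zero_add]
    rw [h3]
    have : (KB K i).mkQ z ∈ Submodule.map (KB K i).mkQ
        (maximalIdeal A • (⊤ : Submodule A (K.X i))) := Submodule.mem_map_of_mem hz
    rw [Submodule.map_smul''] at this
    exact Submodule.smul_mono le_rfl le_top this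
  obtain ⟨g, hg⟩ := lemL c hinjc
  refine ⟨g, fun v => ?_⟩
  rw [← hcap, hg]

theorem exactBot (n : ℤ) (hn : KCbot K n)
    [Module.Projective A (K.X n)]
    (M : Type) [AddCommGroup M] [Module A M] :
    ∀ x : (K.X n : Type) ⊗[A] M, LinearMap.rTensor M (K.d n (n+1)).hom x = 0 →
      ∃ y : (K.X (n-1) : Type) ⊗[A] M, LinearMap.rTensor M (K.d (n-1) n).hom y = x := by
  obtain ⟨⟨σ, hσ⟩, ht⟩ := hn
  obtain ⟨t, ht⟩ := ht (n+1) rfl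
  intro x hx
  have h1 : t ∘ₗ (K.d n (n+1)).hom = (KB K n).mkQ := by
    ext v
    exact ht v
  have hπx : LinearMap.rTensor M (KB K n).mkQ x = 0 := by
    rw [← h1, LinearMap.rTensor_comp, LinearMap.comp_apply, hx, map_zero]
  set u : (K.X n : Type) →ₗ[A] K.X n :=
    (LinearMap.id : (K.X n : Type) →ₗ[A] K.X n) - σ ∘ₗ (KB K n).mkQ with hu
  have humem : ∀ v : K.X n, u v ∈ KB K n := by
    intro v
    rw [← Submodule.ker_mkQ (KB K n), LinearMap.mem_ker]
    show (KB K n).mkQ (v - σ ((KB K n).mkQ v)) = 0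
    rw [map_sub, hσ, sub_self]
  obtain ⟨ℓ, hℓ⟩ := Module.projective_lifting_property (K.d (n-1) n).hom.rangeRestrict
    (u.codRestrict (LinearMap.range (K.d (n-1) n).hom) (fun v => humem v))
    (LinearMap.surjective_rangeRestrict _)
  have hdl : (K.d (n-1) n).hom ∘ₗ ℓ + σ ∘ₗ (KB K n).mkQ
      = (LinearMap.id : (K.X n : Type) →ₗ[A] K.X n) := by
    ext v
    have h2 : K.d (n-1) n (ℓ v) = (u v : K.X n) := by
      have := DFunLike.congr_fun hℓ v
      exact congrArg (Subtype.val) this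
    show K.d (n-1) n (ℓ v) + σ ((KB K n).mkQ v) = v
    rw [h2]
    show (v - σ ((KB K n).mkQ v)) + σ ((KB K n).mkQ v) = v
    abel
  have h5 : LinearMap.rTensor M ((K.d (n-1) n).hom ∘ₗ ℓ) x
      + LinearMap.rTensor M (σ ∘ₗ (KB K n).mkQ) x = x := by
    rw [← LinearMap.add_apply, ← LinearMap.rTensor_add, hdl, LinearMap.rTensor_id,
      LinearMap.id_apply]
  have h6 : LinearMap.rTensor M (σ ∘ₗ (KB K n).mkQ) x = 0 := by
    rw [LinearMap.rTensor_comp, LinearMap.comp_apply, hπx, map_zero]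
  refine ⟨LinearMap.rTensor M ℓ x, ?_⟩
  rw [← LinearMap.rTensor_comp_apply]
  rw [h6, add_zero] at h5
  exact h5

theorem KCtopAll [IsLocalRing A] [IsNoetherianRing A]
    (hfgproj : ∀ n : ℤ, Module.Finite A (K.X n) ∧ Module.Projective A (K.X n))
    (n₁ : ℤ) (hb : ∀ n : ℤ, n₁ < n → Subsingleton (K.X n)) (b : ℤ)
    (hEmod : ∀ i : ℤ, b < i →
      ∀ v : K.X i, K.d i (i+1) v ∈ maximalIdeal A • (⊤ : Submodule A (K.X (i+1))) →
      v ∈ LinearMap.range (K.d (i-1) i).hom ⊔ maximalIdeal A • (⊤ : Submodule A (K.X i))) :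
    ∀ i : ℤ, b < i → KCtop K i := by
  have main : ∀ j : ℕ, ∀ i : ℤ, b < i → n₁ + 1 ≤ i + j → KCtop K i := by
    intro j
    induction j with
    | zero =>
      intro i hb' hj
      exact KCtopBase K i (hb i (by omega))
    | succ j ih =>
      intro i hb' hj
      by_cases hc : n₁ < i
      · exact KCtopBase K i (hb i hc)
      · haveI := (hfgproj i).1
        haveI := (hfgproj i).2
        exact KCtopStep K i (ih (i+1) (by omega) (by omega)) (hEmod i hb')
  intro i hb'
  exact main (n₁ + 1 - i).toNat i hb' (by omega)

theorem KCbotAll [IsLocalRing A]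
    (hfgproj : ∀ n : ℤ, Module.Finite A (K.X n) ∧ Module.Projective A (K.X n))
    (n₀ : ℤ) (hb : ∀ n : ℤ, n < n₀ → Subsingleton (K.X n)) (a : ℤ)
    (hEmod : ∀ i : ℤ, i < a →
      ∀ v : K.X i, K.d i (i+1) v ∈ maximalIdeal A • (⊤ : Submodule A (K.X (i+1))) →
      v ∈ LinearMap.range (K.d (i-1) i).hom ⊔ maximalIdeal A • (⊤ : Submodule A (K.X i))) :
    ∀ i : ℤ, i < a → KCbot K i := by
  have main : ∀ j : ℕ, ∀ i : ℤ, i < a → i ≤ n₀ - 1 + j → KCbot K i := by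
    intro j
    induction j with
    | zero =>
      intro i ha' hj
      exact KCbotBase K i (hb i (by omega))
    | succ j ih =>
      intro i ha' hj
      by_cases hc : i < n₀
      · exact KCbotBase K i (hb i hc)
      · haveI := (hfgproj i).1
        haveI := (hfgproj (i+1)).2
        exact KCbotStep K i (ih (i-1) (by omega) (by omega)) (hEmod i ha')
  intro i ha'
  exact main (i - (n₀ - 1)).toNat i ha' (by omega)

end complex

end Stmt6Aux

/-- Let `(A, m)` be a commutative noetherian local ring and `K` a perfect
complex of `A`-modules (given as a bounded complex of finitely generated projective
modules).  Then `K` has Tor-amplitude contained in `[a,b]` (i.e. `Hⁿ(K ⊗^L M) = 0`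
for every module `M` and every `n ∉ [a,b]`) if and only if
`Hⁿ(K ⊗^L A/m) = 0` for all `n ∉ [a,b]`. -/
theorem stmt6 (A : Type) [CommRing A] [IsNoetherianRing A] [IsLocalRing A]
    (a b : ℤ) (K : CochainComplex (ModuleCat.{0} A) ℤ)
    (hfgproj : ∀ n : ℤ, Module.Finite A (K.X n) ∧ Module.Projective A (K.X n))
    (hbdd : ∃ n₀ n₁ : ℤ, ∀ n : ℤ, (n < n₀ ∨ n₁ < n) → IsZero (K.X n)) :
    (∀ (M : ModuleCat.{0} A) (n : ℤ), (n < a ∨ b < n) → IsZero ((cxTensor K M).homology n)) ↔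
      (∀ n : ℤ, (n < a ∨ b < n) →
        IsZero ((cxTensor K (ModuleCat.of A (IsLocalRing.ResidueField A))).homology n)) := by
  classical
  open Stmt6Aux IsLocalRing TensorProduct in
  constructor
  · intro h n hn
    exact h _ n hn
  · intro hk M n hn
    obtain ⟨n₀, n₁, hbdd'⟩ := hbdd
    rw [Stmt6Aux.isZero_homology_cxTensor_iff]
    have hkE : ∀ i : ℤ, (i < a ∨ b < i) →
        ∀ x : (K.X i : Type) ⊗[A] (IsLocalRing.ResidueField A),
          LinearMap.rTensor _ (K.d i (i+1)).hom x = 0 →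
          ∃ y : (K.X (i-1) : Type) ⊗[A] (IsLocalRing.ResidueField A),
            LinearMap.rTensor _ (K.d (i-1) i).hom y = x := by
      intro i hi
      exact (Stmt6Aux.isZero_homology_cxTensor_iff K (ModuleCat.of A (IsLocalRing.ResidueField A)) i).mp (hk i hi)
    have hsub0 : ∀ m : ℤ, m < n₀ → Subsingleton (K.X m) :=
      fun m hm => Stmt6Aux.subsingleton_of_isZero (hbdd' m (Or.inl hm))
    have hsub1 : ∀ m : ℤ, n₁ < m → Subsingleton (K.X m) :=
      fun m hm => Stmt6Aux.subsingleton_of_isZero (hbdd' m (Or.inr hm))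
    cases hn with
    | inl hlt =>
      haveI := (hfgproj n).2
      have hall := Stmt6Aux.KCbotAll K hfgproj n₀ hsub0 a
        (fun i hi => Stmt6Aux.emod_of_exact (hkE i (Or.inl hi)))
      exact Stmt6Aux.exactBot K n (hall n hlt) M
    | inr hgt =>
      have hall := Stmt6Aux.KCtopAll K hfgproj n₁ hsub1 b
        (fun i hi => Stmt6Aux.emod_of_exact (hkE i (Or.inr hi)))
      exact Stmt6Aux.exactTop K n (hall n hgt) (hall (n+1) (by omega)) M
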